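/- Let N, κ, M, M₀ be natural numbers with κ ≥ 1, 8κ ≤ N, M ≥ 7N/8, max(M₀, M−M₀) ≤ 2N/3, and κ ≤ min(M₀, M−M₀). Then for every bitstring b ∈ {0,1}^κ, the probability assigned to b by D^WOR_{(M,M₀,κ)} is at most (8/9)^κ. -/

import Mathlib

/-- The probability assigned to a bitstring `b` of length `K` by the distribution
`D^WOR_{(M,M₀,K)}`. -/
def dwor (M M₀ K : ℕ) (b : Fin K → Bool) : ℚ :=
  (∏ j ∈ Finset.range K, 1 / ((M : ℚ) - j)) *
    (∏ j ∈ Finset.range (Finset.univ.filter fun i => b i = false).card,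
      ((M₀ : ℚ) - j)) *
    (∏ j ∈ Finset.range (Finset.univ.filter fun i => b i = true).card,
      ((M : ℚ) - (M₀ : ℚ) - j))

/-- Quantitative content of Lemma 1 (first statement): if `κ ≥ 1`, `8κ ≤ N`,
`M ≥ 7N/8`, `max(M₀, M - M₀) ≤ 2N/3` and `κ ≤ min(M₀, M - M₀)`, then every
bitstring of length `κ` has probability at most `(8/9)^κ` under
`D^WOR_{(M,M₀,κ)}`. -/
theorem stmt_7 (N κ M M₀ : ℕ) (hκ : 1 ≤ κ) (hN : 8 * κ ≤ N)
    (hM : 7 * N ≤ 8 * M) (hmax : 3 * max M₀ (M - M₀) ≤ 2 * N)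
    (hmin : κ ≤ min M₀ (M - M₀)) (b : Fin κ → Bool) :
    dwor M M₀ κ b ≤ (8 / 9 : ℚ) ^ κ := by
  -- extract natural-number facts
  have hA : 3 * M₀ ≤ 2 * N := by
    have := le_max_left M₀ (M - M₀); omega
  have hB : κ ≤ M₀ := le_trans hmin (min_le_left _ _)
  have hC : κ + M₀ ≤ M := by
    have h1 := le_trans hmin (min_le_right _ _); omega
  have hD : 3 * M ≤ 2 * N + 3 * M₀ := by
    have := le_max_right M₀ (M - M₀); omega
  have hNpos : 0 < N := by omega
  set k₀ := (Finset.univ.filter fun i => b i = false).card with hk0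
  set k₁ := (Finset.univ.filter fun i => b i = true).card with hk1
  have hsum : k₀ + k₁ = κ := by
    rw [hk0, hk1]
    have := Finset.card_filter_add_card_filter_not
      (s := (Finset.univ : Finset (Fin κ))) (p := fun i => b i = false)
    simpa using this
  have hk0κ : k₀ ≤ κ := by omega
  have hk1κ : k₁ ≤ κ := by omega
  -- cast facts to ℚ
  have hNQ : (0 : ℚ) < N := by exact_mod_cast hNpos
  have hκQ : (1 : ℚ) ≤ κ := by exact_mod_cast hκ
  have hNκ : 8 * (κ : ℚ) ≤ N := by exact_mod_cast hN
  have hMQ : 7 * (N : ℚ) ≤ 8 * M := by exact_mod_cast hM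
  have hAQ : 3 * (M₀ : ℚ) ≤ 2 * N := by exact_mod_cast hA
  have hBQ : (κ : ℚ) ≤ M₀ := by exact_mod_cast hB
  have hCQ : (κ : ℚ) + M₀ ≤ M := by exact_mod_cast hC
  have hDQ : 3 * (M : ℚ) ≤ 2 * N + 3 * M₀ := by exact_mod_cast hD
  -- denominators are large
  have hden : ∀ j ∈ Finset.range κ, 3 * (N : ℚ) / 4 ≤ (M : ℚ) - j := by
    intro j hj
    have hj' : (j : ℚ) + 1 ≤ κ := by
      exact_mod_cast Finset.mem_range.mp hj
    linarith
  have hdpos : (0 : ℚ) < 3 * (N : ℚ) / 4 := by linarith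
  have h1 : (∏ j ∈ Finset.range κ, 1 / ((M : ℚ) - j)) ≤ (1 / (3 * (N : ℚ) / 4)) ^ κ := by
    calc (∏ j ∈ Finset.range κ, 1 / ((M : ℚ) - j))
        ≤ ∏ _j ∈ Finset.range κ, 1 / (3 * (N : ℚ) / 4) := by
          apply Finset.prod_le_prod
          · intro j hj
            exact one_div_nonneg.mpr (le_trans hdpos.le (hden j hj))
          · intro j hj
            exact one_div_le_one_div_of_le hdpos (hden j hj)
      _ = (1 / (3 * (N : ℚ) / 4)) ^ κ := by
          rw [Finset.prod_const, Finset.card_range]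
  have h1nn : (0 : ℚ) ≤ ∏ j ∈ Finset.range κ, 1 / ((M : ℚ) - j) := by
    apply Finset.prod_nonneg
    intro j hj
    exact one_div_nonneg.mpr (le_trans hdpos.le (hden j hj))
  have h2 : (∏ j ∈ Finset.range k₀, ((M₀ : ℚ) - j)) ≤ (2 * (N : ℚ) / 3) ^ k₀ := by
    calc (∏ j ∈ Finset.range k₀, ((M₀ : ℚ) - j))
        ≤ ∏ _j ∈ Finset.range k₀, (2 * (N : ℚ) / 3) := by
          apply Finset.prod_le_prod
          · intro j hj
            have hj' : (j : ℚ) + 1 ≤ k₀ := by exact_mod_cast Finset.mem_range.mp hj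
            have : (k₀ : ℚ) ≤ M₀ := by
              exact_mod_cast le_trans hk0κ hB
            linarith
          · intro j hj
            have : (0 : ℚ) ≤ j := by positivity
            linarith
      _ = (2 * (N : ℚ) / 3) ^ k₀ := by rw [Finset.prod_const, Finset.card_range]
  have h2nn : (0 : ℚ) ≤ ∏ j ∈ Finset.range k₀, ((M₀ : ℚ) - j) := by
    apply Finset.prod_nonneg
    intro j hj
    have hj' : (j : ℚ) + 1 ≤ k₀ := by exact_mod_cast Finset.mem_range.mp hj
    have : (k₀ : ℚ) ≤ M₀ := by exact_mod_cast le_trans hk0κ hB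
    linarith
  have hk1M : (k₁ : ℚ) ≤ (M : ℚ) - M₀ := by
    have : (k₁ : ℚ) ≤ κ := by exact_mod_cast hk1κ
    linarith
  have h3 : (∏ j ∈ Finset.range k₁, ((M : ℚ) - (M₀ : ℚ) - j)) ≤ (2 * (N : ℚ) / 3) ^ k₁ := by
    calc (∏ j ∈ Finset.range k₁, ((M : ℚ) - (M₀ : ℚ) - j))
        ≤ ∏ _j ∈ Finset.range k₁, (2 * (N : ℚ) / 3) := by
          apply Finset.prod_le_prod
          · intro j hj
            have hj' : (j : ℚ) + 1 ≤ k₁ := by exact_mod_cast Finset.mem_range.mp hj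
            linarith
          · intro j hj
            have : (0 : ℚ) ≤ j := by positivity
            linarith
      _ = (2 * (N : ℚ) / 3) ^ k₁ := by rw [Finset.prod_const, Finset.card_range]
  have h3nn : (0 : ℚ) ≤ ∏ j ∈ Finset.range k₁, ((M : ℚ) - (M₀ : ℚ) - j) := by
    apply Finset.prod_nonneg
    intro j hj
    have hj' : (j : ℚ) + 1 ≤ k₁ := by exact_mod_cast Finset.mem_range.mp hj
    linarith
  have hcnn : (0 : ℚ) ≤ 2 * (N : ℚ) / 3 := by linarith
  have key : dwor M M₀ κ b ≤
      (1 / (3 * (N : ℚ) / 4)) ^ κ * (2 * (N : ℚ) / 3) ^ k₀ * (2 * (N : ℚ) / 3) ^ k₁ := by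
    unfold dwor
    rw [← hk0, ← hk1]
    apply mul_le_mul _ h3 h3nn (by positivity)
    apply mul_le_mul h1 h2 h2nn (by positivity)
  calc dwor M M₀ κ b
      ≤ (1 / (3 * (N : ℚ) / 4)) ^ κ * (2 * (N : ℚ) / 3) ^ k₀ * (2 * (N : ℚ) / 3) ^ k₁ := key
    _ = (1 / (3 * (N : ℚ) / 4) * (2 * (N : ℚ) / 3)) ^ κ := by
        rw [mul_assoc, ← pow_add, hsum, ← mul_pow]
    _ = (8 / 9 : ℚ) ^ κ := by
        congr 1
        have hNne : (N : ℚ) ≠ 0 := ne_of_gt hNQ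
        field_simp
        ring
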